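/- arXiv:1308.4915 — 4 statements merged into one kernel-verified Lean document; each statement's English description precedes it below -/
import Mathlib

section
/- For any nonempty subset S ⊆ V with S^c nonempty, lim_{α→∞} λ^α(χ_S) = λ(S). -/
open Finset

/-- Dirichlet energy (gradient) form: `(1/2) ∑_{i,j} w_{ij} (ψ_i - ψ_j)²`. -/
noncomputable def gradE {n : ℕ} (w : Fin n → Fin n → ℝ) (ψ : Fin n → ℝ) : ℝ :=
  (1 / 2) * ∑ i, ∑ j, w i j * (ψ i - ψ j) ^ 2

/-- Weighted squared norm `∑ i, d_i^r ψ_i²`. -/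
noncomputable def dnorm {n : ℕ} (d : Fin n → ℝ) (r : ℝ) (ψ : Fin n → ℝ) : ℝ :=
  ∑ i, Real.rpow (d i) r * ψ i ^ 2

/-- First Dirichlet eigenvalue of the subset `S`. -/
noncomputable def dirEig {n : ℕ} (w : Fin n → Fin n → ℝ) (d : Fin n → ℝ) (r : ℝ)
    (S : Finset (Fin n)) : ℝ :=
  sInf { e : ℝ | ∃ ψ : Fin n → ℝ, (∀ i, i ∉ S → ψ i = 0) ∧ dnorm d r ψ = 1 ∧ e = gradE w ψ }

/-- Relaxed eigenvalue `λ^α(φ)`. -/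
noncomputable def lamAlpha {n : ℕ} (w : Fin n → Fin n → ℝ) (d : Fin n → ℝ) (r α : ℝ)
    (φ : Fin n → ℝ) : ℝ :=
  sInf { e : ℝ | ∃ ψ : Fin n → ℝ, dnorm d r ψ = 1 ∧
    e = gradE w ψ + α * ∑ i, Real.rpow (d i) r * (1 - φ i) * ψ i ^ 2 }

/-- Graph Laplacian `Δ_r = D^{-r}(D - W)` applied to `ψ` at vertex `i`. -/
noncomputable def lapApply {n : ℕ} (w : Fin n → Fin n → ℝ) (d : Fin n → ℝ) (r : ℝ)
    (ψ : Fin n → ℝ) (i : Fin n) : ℝ :=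
  Real.rpow (d i) (-r) * (d i * ψ i - ∑ j, w i j * ψ j)

/-- Indicator function of a vertex subset. -/
def ind {n : ℕ} (S : Finset (Fin n)) : Fin n → ℝ := fun i => if i ∈ S then 1 else 0

/-- The admissible class `𝒜_k`. -/
def memA {k n : ℕ} (Φ : Fin k → Fin n → ℝ) : Prop :=
  (∀ i v, 0 ≤ Φ i v ∧ Φ i v ≤ 1) ∧ ∀ v, ∑ i, Φ i v = 1

/-- The relaxed partition energy `Λ^α_k`. -/
noncomputable def LamK {k n : ℕ} (w : Fin n → Fin n → ℝ) (d : Fin n → ℝ) (r α : ℝ)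
    (Φ : Fin k → Fin n → ℝ) : ℝ :=
  ∑ i, lamAlpha w d r α (Φ i)

/-- The weighted graph is connected. -/
def gconn {n : ℕ} (w : Fin n → Fin n → ℝ) : Prop :=
  ∀ i j : Fin n, Relation.ReflTransGen (fun a b => 0 < w a b) i j


noncomputable def pen {n : ℕ} (d : Fin n → ℝ) (r : ℝ) (S : Finset (Fin n))
    (ψ : Fin n → ℝ) : ℝ :=
  ∑ i, Real.rpow (d i) r * (1 - ind S i) * ψ i ^ 2

private lemma young_ineq (ε a b : ℝ) (hε : 0 < ε) :
    (a + b)^2 ≤ (1+ε)*a^2 + (1+1/ε)*b^2 := by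
  rw [← sub_nonneg]
  have key : (1+ε)*a^2 + (1+1/ε)*b^2 - (a+b)^2 = (ε*a - b)^2/ε := by
    field_simp
    ring
  rw [key]
  positivity

lemma gradE_nonneg' {n : ℕ} (w : Fin n → Fin n → ℝ) (hnn : ∀ i j, 0 ≤ w i j)
    (ψ : Fin n → ℝ) : 0 ≤ gradE w ψ := by
  have h : 0 ≤ ∑ i, ∑ j, w i j * (ψ i - ψ j) ^ 2 :=
    Finset.sum_nonneg fun i _ => Finset.sum_nonneg fun j _ =>
      mul_nonneg (hnn i j) (sq_nonneg _)
  unfold gradE; linarith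

lemma pen_nonneg' {n : ℕ} (d : Fin n → ℝ) (r : ℝ) (hdpos : ∀ i, 0 < d i)
    (S : Finset (Fin n)) (ψ : Fin n → ℝ) : 0 ≤ pen d r S ψ :=
  Finset.sum_nonneg fun i _ => by
    have h1 : (0:ℝ) ≤ 1 - ind S i := by unfold ind; split <;> norm_num
    have h2 : (0:ℝ) < Real.rpow (d i) r := Real.rpow_pos_of_pos (hdpos i) r
    exact mul_nonneg (mul_nonneg h2.le h1) (sq_nonneg _)

lemma gradE_smul' {n : ℕ} (w : Fin n → Fin n → ℝ) (t : ℝ) (ψ : Fin n → ℝ) :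
    gradE w (fun i => t * ψ i) = t^2 * gradE w ψ := by
  unfold gradE
  have h : ∀ i : Fin n, ∑ j, w i j * (t * ψ i - t * ψ j) ^ 2
      = t^2 * ∑ j, w i j * (ψ i - ψ j) ^ 2 := by
    intro i
    rw [Finset.mul_sum]
    exact Finset.sum_congr rfl fun j _ => by ring
  simp only [h, ← Finset.mul_sum]
  ring

lemma dnorm_smul' {n : ℕ} (d : Fin n → ℝ) (r t : ℝ) (ψ : Fin n → ℝ) :
    dnorm d r (fun i => t * ψ i) = t^2 * dnorm d r ψ := by
  unfold dnorm
  rw [Finset.mul_sum]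
  exact Finset.sum_congr rfl fun i _ => by ring

lemma key_lower {n : ℕ} (w : Fin n → Fin n → ℝ)
    (hsym : ∀ i j, w i j = w j i) (hnn : ∀ i j, 0 ≤ w i j)
    (r : ℝ) (d : Fin n → ℝ) (hd : ∀ i, d i = ∑ j, w i j) (hdpos : ∀ i, 0 < d i)
    (S : Finset (Fin n)) (L : ℝ) (hL0 : 0 ≤ L)
    (hLle : ∀ ψ : Fin n → ℝ, (∀ i, i ∉ S → ψ i = 0) → dnorm d r ψ = 1 → L ≤ gradE w ψ)
    (ε α : ℝ) (hε : 0 < ε) (hα : 0 < α)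
    (hαM : (1+1/ε) * (∑ i, Real.rpow (d i) (1-r)) ≤ α)
    (ψ : Fin n → ℝ) (hψ : dnorm d r ψ = 1) :
    L ≤ (1 + ε + L/α) * (gradE w ψ + α * pen d r S ψ) := by
  set E := gradE w ψ with hE
  set P := pen d r S ψ with hPdef
  set M := ∑ i, Real.rpow (d i) (1-r) with hM
  set u : Fin n → ℝ := fun i => (1 - ind S i) * ψ i ^ 2 with hu
  set φ : Fin n → ℝ := fun i => if i ∈ S then ψ i else 0 with hφ
  clear_value E P M u φ
  have hu0 : ∀ i, 0 ≤ u i := by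
    intro i
    rw [hu]
    have h1 : (0:ℝ) ≤ 1 - ind S i := by unfold ind; split <;> norm_num
    exact mul_nonneg h1 (sq_nonneg _)
  have hdr : ∀ i, (0:ℝ) < Real.rpow (d i) r := fun i => Real.rpow_pos_of_pos (hdpos i) r
  have hP : P = ∑ i, Real.rpow (d i) r * u i := by
    rw [hPdef]; unfold pen
    exact Finset.sum_congr rfl fun i _ => by rw [hu]; ring
  have hP0 : 0 ≤ P := hPdef ▸ pen_nonneg' d r hdpos S ψ
  have hE0 : 0 ≤ E := hE ▸ gradE_nonneg' w hnn ψ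
  -- norm of truncation
  have hφnorm : dnorm d r φ = 1 - P := by
    rw [← hψ, hP]
    unfold dnorm
    rw [← Finset.sum_sub_distrib]
    refine Finset.sum_congr rfl fun i _ => ?_
    by_cases hi : i ∈ S <;> simp [hφ, hu, ind, hi] <;> ring
  -- step 1 : L * (1 - P) ≤ gradE w φ
  have hφS : ∀ i, i ∉ S → φ i = 0 := by
    intro i hi; simp [hφ, hi]
  have hgφ0 : 0 ≤ gradE w φ := gradE_nonneg' w hnn φ
  have step1 : L * (1 - P) ≤ gradE w φ := by
    rcases le_or_gt (1 - P) 0 with h1 | h1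
    · nlinarith
    · set s := Real.sqrt (1 - P) with hs
      have hspos : 0 < s := Real.sqrt_pos.mpr h1
      have hs2 : s^2 = 1 - P := Real.sq_sqrt h1.le
      have hnorm' : dnorm d r (fun i => s⁻¹ * φ i) = 1 := by
        rw [dnorm_smul', hφnorm, ← hs2]
        field_simp
      have hvan : ∀ i, i ∉ S → s⁻¹ * φ i = 0 := by
        intro i hi; rw [hφS i hi, mul_zero]
      have hL := hLle _ hvan hnorm'
      rw [gradE_smul'] at hL
      have h2 : (s⁻¹)^2 = (1-P)⁻¹ := by
        rw [← hs2]; rw [inv_pow]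
      rw [h2] at hL
      calc L * (1 - P) ≤ ((1-P)⁻¹ * gradE w φ) * (1-P) :=
            mul_le_mul_of_nonneg_right hL h1.le
        _ = gradE w φ := by field_simp
  -- pointwise bound
  have hpt : ∀ i j, w i j * (φ i - φ j)^2
      ≤ w i j * ((1+ε)*(ψ i - ψ j)^2 + (1+1/ε)*(u i + u j)) := by
    intro i j
    refine mul_le_mul_of_nonneg_left ?_ (hnn i j)
    have hc2 : (0:ℝ) < 1 + 1/ε := by
      have := one_div_pos.mpr hε; linarith
    by_cases hi : i ∈ S <;> by_cases hj : j ∈ S <;>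
      simp only [hφ, hu, ind, hi, hj, if_true, if_false, sub_zero, zero_sub, sub_self,
        zero_mul, mul_zero, add_zero, zero_add, mul_one, one_mul, neg_sq]
    · nlinarith [mul_nonneg hε.le (sq_nonneg (ψ i - ψ j))]
    · have h := young_ineq ε (ψ i - ψ j) (ψ j) hε
      rw [sub_add_cancel] at h
      linarith
    · have h := young_ineq ε (ψ j - ψ i) (ψ i) hε
      rw [sub_add_cancel] at h
      have h2 : (ψ j - ψ i)^2 = (ψ i - ψ j)^2 := by ring
      rw [h2] at h
      linarith
    · have hA := mul_nonneg (by linarith : (0:ℝ) ≤ 1+ε) (sq_nonneg (ψ i - ψ j))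
      have hB := mul_nonneg hc2.le
        (by positivity : (0:ℝ) ≤ ψ i^2 + ψ j^2)
      linarith
  -- sum manipulations
  have hw1 : ∑ i, ∑ j, w i j * u i = ∑ i, d i * u i := by
    refine Finset.sum_congr rfl fun i _ => ?_
    rw [← Finset.sum_mul, ← hd i]
  have hw2 : ∑ i, ∑ j, w i j * u j = ∑ j, d j * u j := by
    rw [Finset.sum_comm]
    refine Finset.sum_congr rfl fun j _ => ?_
    rw [← Finset.sum_mul]
    congr 1
    rw [hd j]
    exact Finset.sum_congr rfl fun i _ => hsym i j
  have hexpand : ∑ i, ∑ j, w i j * ((1+ε)*(ψ i - ψ j)^2 + (1+1/ε)*(u i + u j))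
      = (1+ε) * (∑ i, ∑ j, w i j * (ψ i - ψ j)^2)
        + (1+1/ε) * (∑ i, ∑ j, w i j * u i) + (1+1/ε) * (∑ i, ∑ j, w i j * u j) := by
    rw [Finset.mul_sum, Finset.mul_sum, Finset.mul_sum, ← Finset.sum_add_distrib,
      ← Finset.sum_add_distrib]
    refine Finset.sum_congr rfl fun i _ => ?_
    rw [Finset.mul_sum, Finset.mul_sum, Finset.mul_sum, ← Finset.sum_add_distrib,
      ← Finset.sum_add_distrib]
    exact Finset.sum_congr rfl fun j _ => by ring
  have hsum : ∑ i, ∑ j, w i j * (φ i - φ j)^2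
      ≤ ∑ i, ∑ j, w i j * ((1+ε)*(ψ i - ψ j)^2 + (1+1/ε)*(u i + u j)) :=
    Finset.sum_le_sum fun i _ => Finset.sum_le_sum fun j _ => hpt i j
  have step2 : gradE w φ ≤ (1+ε) * E + (1+1/ε) * ∑ i, d i * u i := by
    have h : gradE w φ ≤ (1/2) *
        (∑ i, ∑ j, w i j * ((1+ε)*(ψ i - ψ j)^2 + (1+1/ε)*(u i + u j))) := by
      unfold gradE
      linarith
    rw [hexpand, hw1, hw2] at h
    have hET : E = (1/2) * ∑ i, ∑ j, w i j * (ψ i - ψ j)^2 := by rw [hE]; rfl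
    rw [hET]
    linarith
  -- step 3 : ∑ d u ≤ M * P
  have step3 : ∑ i, d i * u i ≤ M * P := by
    rw [hP, Finset.mul_sum]
    refine Finset.sum_le_sum fun i _ => ?_
    have hd' : d i = Real.rpow (d i) (1-r) * Real.rpow (d i) r := by
      show d i = (d i) ^ (1-r) * (d i) ^ r
      rw [← Real.rpow_add (hdpos i)]
      simp
    have hsplit : d i * u i = Real.rpow (d i) (1-r) * (Real.rpow (d i) r * u i) := by
      conv_lhs => rw [hd']
      rw [mul_assoc]
    rw [hsplit]
    refine mul_le_mul_of_nonneg_right ?_ (mul_nonneg (hdr i).le (hu0 i))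
    rw [hM]
    exact Finset.single_le_sum (f := fun i => Real.rpow (d i) (1-r))
      (fun i _ => (Real.rpow_pos_of_pos (hdpos i) (1-r)).le) (Finset.mem_univ i)
  -- combine
  have hM0 : 0 ≤ M := by
    rw [hM]
    exact Finset.sum_nonneg fun i _ => (Real.rpow_pos_of_pos (hdpos i) (1-r)).le
  have hc2 : (0:ℝ) < 1 + 1/ε := by
    have := one_div_pos.mpr hε; linarith
  have h4 : (1+1/ε) * M * P ≤ (1+ε) * (α * P) := by
    have h41 : (1+1/ε) * M * P ≤ α * P :=
      mul_le_mul_of_nonneg_right hαM hP0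
    nlinarith [mul_nonneg hα.le hP0]
  have h5 : L ≤ (1+ε) * (E + α * P) + L * P := by nlinarith [step1, step2, step3, h4]
  have hPe : P ≤ (E + α * P) / α := by
    rw [le_div_iff₀ hα]
    nlinarith
  have h6 : L * P ≤ (L/α) * (E + α * P) := by
    have := mul_le_mul_of_nonneg_left hPe hL0
    calc L * P ≤ L * ((E + α * P)/α) := this
      _ = (L/α) * (E + α * P) := by ring
  calc L ≤ (1+ε) * (E + α * P) + L * P := h5
    _ ≤ (1+ε) * (E + α * P) + (L/α) * (E + α * P) := by linarith
    _ = (1 + ε + L/α) * (E + α * P) := by ring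

lemma lamAlpha_eq_pen {n : ℕ} (w : Fin n → Fin n → ℝ) (d : Fin n → ℝ) (r α : ℝ)
    (S : Finset (Fin n)) :
    lamAlpha w d r α (ind S) = sInf { e : ℝ | ∃ ψ : Fin n → ℝ, dnorm d r ψ = 1 ∧
      e = gradE w ψ + α * pen d r S ψ } := rfl


/-- `lim_{α → ∞} λ^α(χ_S) = λ(S)`. -/
theorem lamAlpha_tendsto_dirEig
    (n : ℕ) (w : Fin n → Fin n → ℝ)
    (hsym : ∀ i j, w i j = w j i) (hnn : ∀ i j, 0 ≤ w i j)
    (hconn : gconn w)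
    (r : ℝ) (hr : r ∈ Set.Icc (0 : ℝ) 1)
    (d : Fin n → ℝ) (hd : ∀ i, d i = ∑ j, w i j) (hdpos : ∀ i, 0 < d i)
    (S : Finset (Fin n)) (hS : S.Nonempty) (hSc : Sᶜ.Nonempty) :
    Filter.Tendsto (fun α : ℝ => lamAlpha w d r α (ind S)) Filter.atTop
      (nhds (dirEig w d r S)) := by
  obtain ⟨i0, hi0⟩ := hS
  have hdr : ∀ i, (0:ℝ) < Real.rpow (d i) r := fun i => Real.rpow_pos_of_pos (hdpos i) r
  -- the unit-norm test function supported at i0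
  set ψ0 : Fin n → ℝ := fun i => if i = i0 then Real.sqrt ((Real.rpow (d i0) r)⁻¹) else 0
    with hψ0
  have hψ0norm : dnorm d r ψ0 = 1 := by
    unfold dnorm
    rw [Finset.sum_eq_single i0]
    · simp only [hψ0, if_pos rfl]
      rw [Real.sq_sqrt (inv_nonneg.mpr (hdr i0).le)]
      exact mul_inv_cancel₀ (ne_of_gt (hdr i0))
    · intro b _ hb
      simp [hψ0, hb]
    · simp
  have hψ0S : ∀ i, i ∉ S → ψ0 i = 0 := by
    intro i hi
    simp only [hψ0]
    rw [if_neg]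
    rintro rfl
    exact hi hi0
  -- the Dirichlet set
  set dSet := { e : ℝ | ∃ ψ : Fin n → ℝ, (∀ i, i ∉ S → ψ i = 0) ∧ dnorm d r ψ = 1 ∧
    e = gradE w ψ } with hdSet
  have hdne : dSet.Nonempty := ⟨gradE w ψ0, ψ0, hψ0S, hψ0norm, rfl⟩
  have hdbdd : BddBelow dSet := ⟨0, fun e he => by
    obtain ⟨ψ, _, _, rfl⟩ := he
    exact gradE_nonneg' w hnn ψ⟩
  set L := dirEig w d r S with hLdef
  have hL0 : 0 ≤ L := le_csInf hdne fun e he => by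
    obtain ⟨ψ, _, _, rfl⟩ := he
    exact gradE_nonneg' w hnn ψ
  have hLle : ∀ ψ : Fin n → ℝ, (∀ i, i ∉ S → ψ i = 0) → dnorm d r ψ = 1 →
      L ≤ gradE w ψ := fun ψ hv hn => csInf_le hdbdd ⟨ψ, hv, hn, rfl⟩
  -- the relaxed sets
  set lSet : ℝ → Set ℝ := fun α => { e : ℝ | ∃ ψ : Fin n → ℝ, dnorm d r ψ = 1 ∧
    e = gradE w ψ + α * pen d r S ψ } with hlSet
  have hlne : ∀ α, (lSet α).Nonempty := fun α =>
    ⟨gradE w ψ0 + α * pen d r S ψ0, ψ0, hψ0norm, rfl⟩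
  have hlbdd : ∀ α, 0 ≤ α → BddBelow (lSet α) := fun α hα => ⟨0, fun e he => by
    obtain ⟨ψ, _, rfl⟩ := he
    have := gradE_nonneg' w hnn ψ
    have := pen_nonneg' d r hdpos S ψ
    nlinarith⟩
  -- upper bound
  have hub : ∀ α : ℝ, 0 ≤ α → lamAlpha w d r α (ind S) ≤ L := by
    intro α hα
    rw [lamAlpha_eq_pen, hLdef]
    apply csInf_le_csInf (hlbdd α hα) hdne
    rintro e ⟨ψ, hv, hnorm, rfl⟩
    refine ⟨ψ, hnorm, ?_⟩
    have hpen : pen d r S ψ = 0 := by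
      apply Finset.sum_eq_zero
      intro i _
      by_cases hi : i ∈ S
      · simp [ind, hi]
      · rw [hv i hi]
        ring
    rw [hpen]
    ring
  -- main convergence
  rw [Metric.tendsto_atTop]
  intro δ hδ
  set ε := δ / (2 * (L + 1)) with hεdef
  have hε : 0 < ε := by
    rw [hεdef]
    positivity
  set M := ∑ i, Real.rpow (d i) (1-r) with hM
  refine ⟨max ((1+1/ε) * M) (2*(L^2+1)/δ), fun α hα => ?_⟩
  have hα1 : (1+1/ε) * M ≤ α := le_trans (le_max_left _ _) hα
  have hα2 : 2*(L^2+1)/δ ≤ α := le_trans (le_max_right _ _) hα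
  have hαpos : 0 < α := lt_of_lt_of_le (by positivity) hα2
  -- lower bound via the key lemma
  set c := 1 + ε + L/α with hc
  have hc1 : (1:ℝ) ≤ c := by
    rw [hc]
    have : 0 ≤ L/α := div_nonneg hL0 hαpos.le
    linarith
  have hcpos : (0:ℝ) < c := by linarith
  have hlow : L / c ≤ lamAlpha w d r α (ind S) := by
    rw [lamAlpha_eq_pen]
    apply le_csInf (hlne α)
    rintro e ⟨ψ, hnorm, rfl⟩
    rw [div_le_iff₀ hcpos, hc]
    have := key_lower w hsym hnn r d hd hdpos S L hL0 hLle ε α hε hαpos hα1 ψ hnorm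
    nlinarith [this]
  have hLc : L ≤ lamAlpha w d r α (ind S) * c := (div_le_iff₀ hcpos).mp hlow
  have hub' := hub α hαpos.le
  -- |λ^α - L| < δ
  have hgap : L - lamAlpha w d r α (ind S) ≤ L * (ε + L/α) := by
    have h1 : L - lamAlpha w d r α (ind S) ≤ lamAlpha w d r α (ind S) * (c - 1) := by
      nlinarith
    have h2 : lamAlpha w d r α (ind S) * (c - 1) ≤ L * (c - 1) :=
      mul_le_mul_of_nonneg_right hub' (by linarith)
    have h3 : c - 1 = ε + L/α := by rw [hc]; ring
    rw [h3] at h1 h2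
    linarith
  have hεL : L * ε ≤ δ/2 := by
    have hx : L * ε * (2*(L+1)) = L * δ := by
      rw [hεdef]
      field_simp
    nlinarith [mul_nonneg hL0 hε.le]
  have hL2 : L * (L/α) < δ/2 := by
    have h1 : 2*(L^2+1) ≤ δ * α := by
      rw [div_le_iff₀ hδ] at hα2
      linarith
    rw [mul_div_assoc']
    rw [div_lt_iff₀ hαpos]
    nlinarith
  rw [Real.dist_eq, abs_lt]
  constructor
  · have : L * (ε + L/α) = L * ε + L * (L/α) := by ring
    nlinarith
  · nlinarith
end

section
/- One iteration of the rearrangement algorithm does not increase the relaxed energy: if (φ₁,…,φ_k) ∈ 𝒜_k, ψ_i is a normalized minimizer for λ^α(φ_i), each vertex v is assigned label argmax_j ψ_j(v), and (φ₁⁺,…,φ_k⁺) are the indicators of the resulting label sets, then Σᵢ λ^α(φᵢ⁺) ≤ Σᵢ λ^α(φᵢ). -/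
open Finset

/-- one iteration of the rearrangement algorithm does not increase the
relaxed energy `Λ^α_k`. -/
theorem rearrangement_step_decreases
    (n k : ℕ) (hk : 0 < k)
    (w : Fin n → Fin n → ℝ)
    (hsym : ∀ i j, w i j = w j i) (hnn : ∀ i j, 0 ≤ w i j)
    (r : ℝ) (hr : r ∈ Set.Icc (0 : ℝ) 1)
    (d : Fin n → ℝ) (hd : ∀ i, d i = ∑ j, w i j) (hdpos : ∀ i, 0 < d i)
    (α : ℝ) (hα : 0 < α)
    (Φ : Fin k → Fin n → ℝ) (hΦ : memA Φ)
    (ψ : Fin k → Fin n → ℝ)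
    (hψpos : ∀ i v, 0 < ψ i v)
    (hψnorm : ∀ i, dnorm d r (ψ i) = 1)
    (hψmin : ∀ i, gradE w (ψ i)
      + α * ∑ v, Real.rpow (d v) r * (1 - Φ i v) * ψ i v ^ 2 = lamAlpha w d r α (Φ i))
    (ℓ : Fin n → Fin k) (hargmax : ∀ v j, ψ j v ≤ ψ (ℓ v) v) :
    LamK w d r α (fun i v => if ℓ v = i then (1 : ℝ) else 0) ≤ LamK w d r α Φ := by

  unfold LamK
  have hgE : ∀ χ : Fin n → ℝ, 0 ≤ gradE w χ := by
    intro χ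
    unfold gradE
    apply mul_nonneg (by norm_num)
    apply Finset.sum_nonneg; intro i _
    apply Finset.sum_nonneg; intro j _
    exact mul_nonneg (hnn i j) (sq_nonneg _)
  have hdr : ∀ v, 0 ≤ Real.rpow (d v) r := fun v =>
    (Real.rpow_pos_of_pos (hdpos v) r).le
  -- step 1: lamAlpha (φ⁺ i) ≤ energy of ψ i with φ⁺
  have step1 : ∀ i : Fin k, lamAlpha w d r α (fun v => if ℓ v = i then (1:ℝ) else 0) ≤
      gradE w (ψ i) + α * ∑ v, Real.rpow (d v) r *
        (1 - (if ℓ v = i then (1:ℝ) else 0)) * ψ i v ^ 2 := by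
    intro i
    apply csInf_le
    · refine ⟨0, ?_⟩
      rintro e ⟨χ, -, -, rfl⟩
      have : 0 ≤ ∑ v, Real.rpow (d v) r * (1 - (if ℓ v = i then (1:ℝ) else 0)) * χ v ^ 2 := by
        apply Finset.sum_nonneg; intro v _
        apply mul_nonneg (mul_nonneg (hdr v) ?_) (sq_nonneg _)
        split <;> norm_num
      exact add_nonneg (hgE χ) (mul_nonneg hα.le this)
    · exact ⟨ψ i, hψnorm i, rfl⟩
  calc ∑ i, lamAlpha w d r α (fun v => if ℓ v = i then (1:ℝ) else 0)
      ≤ ∑ i, (gradE w (ψ i) + α * ∑ v, Real.rpow (d v) r *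
          (1 - (if ℓ v = i then (1:ℝ) else 0)) * ψ i v ^ 2) :=
        Finset.sum_le_sum fun i _ => step1 i
    _ ≤ ∑ i, (gradE w (ψ i) + α * ∑ v, Real.rpow (d v) r * (1 - Φ i v) * ψ i v ^ 2) := by
        rw [Finset.sum_add_distrib, Finset.sum_add_distrib, ← Finset.mul_sum, ← Finset.mul_sum]
        apply add_le_add_right
        apply mul_le_mul_of_nonneg_left ?_ hα.le
        have swap : ∀ f : Fin k → Fin n → ℝ,
            ∑ i, ∑ v, f i v = ∑ v, ∑ i, f i v := fun f => Finset.sum_comm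
        rw [swap (fun i v => Real.rpow (d v) r * (1 - (if ℓ v = i then (1:ℝ) else 0)) * ψ i v ^ 2),
          swap (fun i v => Real.rpow (d v) r * (1 - Φ i v) * ψ i v ^ 2)]
        apply Finset.sum_le_sum; intro v _
        have key : ∑ i, Φ i v * ψ i v ^ 2 ≤
            ∑ i, (if ℓ v = i then (1:ℝ) else 0) * ψ i v ^ 2 := by
          have rhs : ∑ i, (if ℓ v = i then (1:ℝ) else 0) * ψ i v ^ 2 = ψ (ℓ v) v ^ 2 := by
            simp [ite_mul]
          rw [rhs]
          calc ∑ i, Φ i v * ψ i v ^ 2 ≤ ∑ i, Φ i v * ψ (ℓ v) v ^ 2 := by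
                apply Finset.sum_le_sum; intro i _
                apply mul_le_mul_of_nonneg_left ?_ (hΦ.1 i v).1
                exact pow_le_pow_left₀ (hψpos i v).le (hargmax v i) 2
            _ = ψ (ℓ v) v ^ 2 := by rw [← Finset.sum_mul, hΦ.2 v, one_mul]
        have expand : ∀ φv : Fin k → ℝ,
            ∑ i, Real.rpow (d v) r * (1 - φv i) * ψ i v ^ 2 =
            Real.rpow (d v) r * (∑ i, ψ i v ^ 2 - ∑ i, φv i * ψ i v ^ 2) := by
          intro φv
          rw [mul_sub, Finset.mul_sum, Finset.mul_sum, ← Finset.sum_sub_distrib]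
          exact Finset.sum_congr rfl fun i _ => by ring
        rw [expand, expand]
        apply mul_le_mul_of_nonneg_left ?_ (hdr v)
        linarith [key]
    _ = ∑ i, lamAlpha w d r α (Φ i) := by
        exact Finset.sum_congr rfl fun i _ => hψmin i
end

section
/- At a fixed point of the rearrangement algorithm, the first-order optimality condition holds: for any admissible perturbation directions {δφ_i} at (φ₁,…,φ_k) ∈ 𝒜_k (i.e., δφ_i(v) = t_{i,v} with Σᵢ t_{i,v} = 0 for each v, t_{i,v} ≥ 0 where φ_i(v) = 0 and t_{i,v} ≤ 0 where φ_i(v) = 1), the directional derivative −α Σᵢ Σ_v t_{i,v} ψᵢ(v)² is nonnegative, where ψ_i is the normalized minimizer for λ^α(φ_i). -/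
open Finset

/-- at a fixed point of the rearrangement algorithm the first-order
optimality condition holds: the directional derivative `-α Σᵢ Σ_v t_{i,v} ψᵢ(v)²` is
nonnegative for every admissible perturbation direction. -/
theorem fixed_point_first_order_optimality
    (n k : ℕ) (hk : 0 < k)
    (w : Fin n → Fin n → ℝ)
    (hsym : ∀ i j, w i j = w j i) (hnn : ∀ i j, 0 ≤ w i j)
    (hconn : gconn w)
    (r : ℝ) (hr : r ∈ Set.Icc (0 : ℝ) 1)
    (d : Fin n → ℝ) (hd : ∀ i, d i = ∑ j, w i j) (hdpos : ∀ i, 0 < d i)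
    (α : ℝ) (hα : 0 < α)
    (ℓ : Fin n → Fin k)
    (Φ : Fin k → Fin n → ℝ) (hΦ : Φ = fun i v => if ℓ v = i then (1 : ℝ) else 0)
    (ψ : Fin k → Fin n → ℝ)
    (hψpos : ∀ i v, 0 < ψ i v)
    (hψnorm : ∀ i, dnorm d r (ψ i) = 1)
    (hψmin : ∀ i, gradE w (ψ i)
      + α * ∑ v, Real.rpow (d v) r * (1 - Φ i v) * ψ i v ^ 2 = lamAlpha w d r α (Φ i))
    (hfix : ∀ v j, ψ j v ≤ ψ (ℓ v) v)
    (t : Fin k → Fin n → ℝ)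
    (htsum : ∀ v, ∑ i, t i v = 0)
    (htlo : ∀ i v, Φ i v = 0 → 0 ≤ t i v)
    (hthi : ∀ i v, Φ i v = 1 → t i v ≤ 0) :
    0 ≤ -α * ∑ i, ∑ v, t i v * ψ i v ^ 2 := by
  have key : ∀ v, ∑ i, t i v * ψ i v ^ 2 ≤ 0 := by
    intro v
    have h1 : ∑ i, t i v * ψ i v ^ 2 ≤ ∑ i, t i v * ψ (ℓ v) v ^ 2 := by
      apply Finset.sum_le_sum
      intro i _
      by_cases h : ℓ v = i
      · subst h; exact le_refl _
      · have ht : 0 ≤ t i v := htlo i v (by simp [hΦ, h])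
        have hle : ψ i v ≤ ψ (ℓ v) v := hfix v i
        have hsq : ψ i v ^ 2 ≤ ψ (ℓ v) v ^ 2 :=
          pow_le_pow_left₀ (le_of_lt (hψpos i v)) hle 2
        nlinarith
    have h2 : ∑ i, t i v * ψ (ℓ v) v ^ 2 = 0 := by
      rw [← Finset.sum_mul, htsum v, zero_mul]
    linarith
  have hS : ∑ i, ∑ v, t i v * ψ i v ^ 2 ≤ 0 := by
    rw [Finset.sum_comm]
    exact Finset.sum_nonpos (fun v _ => key v)
  nlinarith
end

section
/- Eigenvector localization at large penalty: for S ⊆ V nonempty with connected induced subgraph and S^c nonempty, the normalized positive minimizers ψ^α of λ^α(χ_S) converge as α → ∞ to the (unique, positive on S) normalized first Dirichlet eigenvector ψ^D of S; in particular Σ_{i∈S^c} d_i^r (ψ^α_i)² → 0. -/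
open Finset

section Aux

variable {n : ℕ}

lemma aux_gradE_nonneg (w : Fin n → Fin n → ℝ) (hnn : ∀ i j, 0 ≤ w i j) (ψ : Fin n → ℝ) :
    0 ≤ gradE w ψ := by
  unfold gradE
  apply mul_nonneg (by norm_num)
  exact Finset.sum_nonneg fun i _ => Finset.sum_nonneg fun j _ =>
    mul_nonneg (hnn i j) (sq_nonneg _)

lemma aux_gradE_eq (w : Fin n → Fin n → ℝ) (hsym : ∀ i j, w i j = w j i)
    (d : Fin n → ℝ) (hd : ∀ i, d i = ∑ j, w i j) (ψ : Fin n → ℝ) :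
    gradE w ψ = (∑ i, d i * ψ i ^ 2) - ∑ i, ∑ j, w i j * (ψ i * ψ j) := by
  unfold gradE
  have hexp : ∀ i j : Fin n, w i j * (ψ i - ψ j) ^ 2
      = w i j * ψ i ^ 2 + w i j * ψ j ^ 2 - 2 * (w i j * (ψ i * ψ j)) := fun i j => by ring
  simp_rw [hexp, Finset.sum_sub_distrib, Finset.sum_add_distrib, ← Finset.mul_sum]
  have hA : ∑ i, ∑ j, w i j * ψ i ^ 2 = ∑ i, d i * ψ i ^ 2 :=
    Finset.sum_congr rfl fun i _ => by rw [← Finset.sum_mul, ← hd i]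
  have hB : ∑ i : Fin n, ∑ j, w i j * ψ j ^ 2 = ∑ i, d i * ψ i ^ 2 := by
    rw [Finset.sum_comm]
    refine Finset.sum_congr rfl fun j _ => ?_
    rw [← Finset.sum_mul]
    congr 1
    rw [hd j]
    exact Finset.sum_congr rfl fun i _ => hsym i j
  rw [hA, hB]
  ring

lemma aux_CS2 (x y u v : ℝ) : x * u + y * v ≤ Real.sqrt ((x ^ 2 + y ^ 2) * (u ^ 2 + v ^ 2)) := by
  rcases le_or_gt (x * u + y * v) 0 with h | h
  · exact h.trans (Real.sqrt_nonneg _)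
  · exact (Real.le_sqrt h.le (by positivity)).mpr (by nlinarith [sq_nonneg (x * v - y * u)])

lemma aux_sqrt_gap (x y u v : ℝ) :
    ((x - u) ^ 2 + (y - v) ^ 2) / 2
      - (Real.sqrt ((x ^ 2 + y ^ 2) / 2) - Real.sqrt ((u ^ 2 + v ^ 2) / 2)) ^ 2
    = Real.sqrt ((x ^ 2 + y ^ 2) * (u ^ 2 + v ^ 2)) - (x * u + y * v) := by
  have hs : Real.sqrt ((x ^ 2 + y ^ 2) / 2) ^ 2 = (x ^ 2 + y ^ 2) / 2 :=
    Real.sq_sqrt (by positivity)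
  have ht : Real.sqrt ((u ^ 2 + v ^ 2) / 2) ^ 2 = (u ^ 2 + v ^ 2) / 2 :=
    Real.sq_sqrt (by positivity)
  have hm : Real.sqrt ((x ^ 2 + y ^ 2) / 2) * Real.sqrt ((u ^ 2 + v ^ 2) / 2)
      = Real.sqrt ((x ^ 2 + y ^ 2) * (u ^ 2 + v ^ 2)) / 2 := by
    rw [← Real.sqrt_mul (by positivity)]
    rw [show (x ^ 2 + y ^ 2) / 2 * ((u ^ 2 + v ^ 2) / 2)
        = (x ^ 2 + y ^ 2) * (u ^ 2 + v ^ 2) * (1 / 4) by ring]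
    rw [Real.sqrt_mul (by positivity)]
    rw [show (1 / 4 : ℝ) = (1 / 2) ^ 2 by norm_num, Real.sqrt_sq (by norm_num)]
    ring
  linear_combination (-1 : ℝ) * hs + (-1 : ℝ) * ht + 2 * hm

lemma aux_dirEig_le (w : Fin n → Fin n → ℝ) (hnn : ∀ i j, 0 ≤ w i j)
    (d : Fin n → ℝ) (r : ℝ) (S : Finset (Fin n)) (ψ : Fin n → ℝ)
    (h0 : ∀ i, i ∉ S → ψ i = 0) (hn : dnorm d r ψ = 1) :
    dirEig w d r S ≤ gradE w ψ := by
  apply csInf_le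
  · refine ⟨0, fun e he => ?_⟩
    obtain ⟨φ, -, -, rfl⟩ := he
    exact aux_gradE_nonneg w hnn φ
  · exact ⟨ψ, h0, hn, rfl⟩

lemma aux_lamAlpha_le (w : Fin n → Fin n → ℝ) (hnn : ∀ i j, 0 ≤ w i j)
    (d : Fin n → ℝ) (hdpos : ∀ i, 0 < d i) (r α : ℝ) (hα : 0 ≤ α)
    (S : Finset (Fin n)) (ψD : Fin n → ℝ)
    (hDzero : ∀ i, i ∉ S → ψD i = 0) (hDnorm : dnorm d r ψD = 1) :
    lamAlpha w d r α (ind S) ≤ gradE w ψD := by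
  apply csInf_le
  · refine ⟨0, fun e he => ?_⟩
    obtain ⟨ψ, -, rfl⟩ := he
    have h1 : 0 ≤ gradE w ψ := aux_gradE_nonneg w hnn ψ
    have h2 : 0 ≤ ∑ i, Real.rpow (d i) r * (1 - ind S i) * ψ i ^ 2 := by
      refine Finset.sum_nonneg fun i _ => ?_
      have hi1 : (0 : ℝ) ≤ 1 - ind S i := by unfold ind; split <;> norm_num
      have hi2 : (0 : ℝ) ≤ Real.rpow (d i) r := Real.rpow_nonneg (hdpos i).le r
      exact mul_nonneg (mul_nonneg hi2 hi1) (sq_nonneg _)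
    nlinarith
  · refine ⟨ψD, hDnorm, ?_⟩
    have hz : ∑ i, Real.rpow (d i) r * (1 - ind S i) * ψD i ^ 2 = 0 :=
      Finset.sum_eq_zero fun i _ => by
        by_cases hi : i ∈ S
        · simp [ind, hi]
        · simp [hDzero i hi]
    rw [hz, mul_zero, add_zero]

lemma aux_penalty_eq (d : Fin n → ℝ) (r : ℝ) (S : Finset (Fin n)) (ψ : Fin n → ℝ) :
    ∑ i, Real.rpow (d i) r * (1 - ind S i) * ψ i ^ 2
      = ∑ i ∈ Sᶜ, Real.rpow (d i) r * ψ i ^ 2 := by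
  rw [← Finset.sum_add_sum_compl S fun i => Real.rpow (d i) r * (1 - ind S i) * ψ i ^ 2]
  have hS0 : ∑ i ∈ S, Real.rpow (d i) r * (1 - ind S i) * ψ i ^ 2 = 0 :=
    Finset.sum_eq_zero fun i hi => by simp [ind, hi]
  have hSc : ∑ i ∈ Sᶜ, Real.rpow (d i) r * (1 - ind S i) * ψ i ^ 2
      = ∑ i ∈ Sᶜ, Real.rpow (d i) r * ψ i ^ 2 :=
    Finset.sum_congr rfl fun i hi => by simp [ind, Finset.mem_compl.mp hi]
  rw [hS0, hSc, zero_add]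

lemma aux_rayleigh (w : Fin n → Fin n → ℝ) (hsym : ∀ i j, w i j = w j i)
    (d : Fin n → ℝ) (hd : ∀ i, d i = ∑ j, w i j) (hdpos : ∀ i, 0 < d i)
    (r α lam : ℝ) (S : Finset (Fin n)) (ψ : Fin n → ℝ)
    (hn : dnorm d r ψ = 1)
    (he : ∀ i, lapApply w d r ψ i + α * (1 - ind S i) * ψ i = lam * ψ i) :
    gradE w ψ + α * ∑ i ∈ Sᶜ, Real.rpow (d i) r * ψ i ^ 2 = lam := by
  have hrr : ∀ i, Real.rpow (d i) r * Real.rpow (d i) (-r) = 1 := fun i => by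
    have h := Real.rpow_add (hdpos i) r (-r)
    rw [show r + -r = (0:ℝ) by ring, Real.rpow_zero] at h
    exact h.symm
  have key : ∀ i, Real.rpow (d i) r * ψ i * lapApply w d r ψ i
      + α * (Real.rpow (d i) r * (1 - ind S i) * ψ i ^ 2)
      = lam * (Real.rpow (d i) r * ψ i ^ 2) := fun i => by
    have h := he i
    linear_combination (Real.rpow (d i) r * ψ i) * h
  have h1 : ∑ i, Real.rpow (d i) r * ψ i * lapApply w d r ψ i = gradE w ψ := by
    have hterm : ∀ i, Real.rpow (d i) r * ψ i * lapApply w d r ψ i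
        = d i * ψ i ^ 2 - ∑ j, w i j * (ψ i * ψ j) := by
      intro i
      have hexp : Real.rpow (d i) r * ψ i * lapApply w d r ψ i
          = ψ i * (d i * ψ i - ∑ j, w i j * ψ j) := by
        unfold lapApply
        have h := hrr i
        linear_combination (ψ i * (d i * ψ i - ∑ j, w i j * ψ j)) * h
      rw [hexp, mul_sub, Finset.mul_sum]
      congr 1
      · ring
      · exact Finset.sum_congr rfl fun j _ => by ring
    rw [Finset.sum_congr rfl fun i _ => hterm i, Finset.sum_sub_distrib,
      aux_gradE_eq w hsym d hd ψ]
  have hsum : (∑ i, Real.rpow (d i) r * ψ i * lapApply w d r ψ i)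
      + α * (∑ i, Real.rpow (d i) r * (1 - ind S i) * ψ i ^ 2)
      = lam * (∑ i, Real.rpow (d i) r * ψ i ^ 2) := by
    rw [Finset.mul_sum, Finset.mul_sum, ← Finset.sum_add_distrib]
    exact Finset.sum_congr rfl fun i _ => key i
  rw [h1, aux_penalty_eq d r S ψ] at hsum
  rw [show (∑ i, Real.rpow (d i) r * ψ i ^ 2) = dnorm d r ψ from rfl, hn, mul_one] at hsum
  exact hsum

lemma aux_dnorm_continuous (d : Fin n → ℝ) (r : ℝ) : Continuous (dnorm d r) := by
  unfold dnorm
  exact continuous_finset_sum _ fun i _ => continuous_const.mul ((continuous_apply i).pow 2)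

lemma aux_gradE_continuous (w : Fin n → Fin n → ℝ) : Continuous (gradE (n := n) w) := by
  unfold gradE
  exact continuous_const.mul (continuous_finset_sum _ fun i _ => continuous_finset_sum _
    fun j _ => continuous_const.mul (((continuous_apply i).sub (continuous_apply j)).pow 2))

lemma aux_isCompact_sphere [Nonempty (Fin n)] (d : Fin n → ℝ) (r : ℝ)
    (hdpos : ∀ i, 0 < d i) :
    IsCompact {ψ : Fin n → ℝ | dnorm d r ψ = 1} := by
  have hclosed : IsClosed {ψ : Fin n → ℝ | dnorm d r ψ = 1} :=
    isClosed_eq (aux_dnorm_continuous d r) continuous_const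
  set C := Finset.univ.sup' Finset.univ_nonempty
      (fun i : Fin n => Real.sqrt (1 / Real.rpow (d i) r)) with hC
  have hCnn : 0 ≤ C := by
    rw [hC]
    exact le_trans (Real.sqrt_nonneg _)
      (Finset.le_sup' (fun i : Fin n => Real.sqrt (1 / Real.rpow (d i) r)) (Finset.mem_univ (Classical.arbitrary (Fin n))))
  have hsub : {ψ : Fin n → ℝ | dnorm d r ψ = 1} ⊆ Metric.closedBall 0 C := by
    intro ψ hψ
    rw [Metric.mem_closedBall, dist_zero_right]
    rw [pi_norm_le_iff_of_nonneg hCnn]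
    intro i
    have hψ' : dnorm d r ψ = 1 := hψ
    have hterm : Real.rpow (d i) r * ψ i ^ 2 ≤ 1 := by
      have hle := Finset.single_le_sum
        (f := fun j => Real.rpow (d j) r * ψ j ^ 2)
        (fun j _ => mul_nonneg (Real.rpow_nonneg (hdpos j).le r) (sq_nonneg _))
        (Finset.mem_univ i)
      rw [show (∑ j, Real.rpow (d j) r * ψ j ^ 2) = dnorm d r ψ from rfl, hψ'] at hle
      exact hle
    have hrp : 0 < Real.rpow (d i) r := Real.rpow_pos_of_pos (hdpos i) r
    have h2 : ψ i ^ 2 ≤ 1 / Real.rpow (d i) r := by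
      rw [le_div_iff₀ hrp]
      nlinarith
    calc ‖ψ i‖ = Real.sqrt (ψ i ^ 2) := by rw [Real.sqrt_sq_eq_abs, Real.norm_eq_abs]
      _ ≤ Real.sqrt (1 / Real.rpow (d i) r) := Real.sqrt_le_sqrt h2
      _ ≤ C := by rw [hC]; exact Finset.le_sup' (fun i : Fin n => Real.sqrt (1 / Real.rpow (d i) r)) (Finset.mem_univ i)
  exact (isCompact_closedBall 0 C).of_isClosed_subset hclosed hsub

lemma aux_unique_min (w : Fin n → Fin n → ℝ)
    (hnn : ∀ i j, 0 ≤ w i j)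
    (r : ℝ) (d : Fin n → ℝ) (hdpos : ∀ i, 0 < d i)
    (S : Finset (Fin n)) (hS : S.Nonempty)
    (hSconn : ∀ i ∈ S, ∀ j ∈ S,
      Relation.ReflTransGen (fun a b => a ∈ S ∧ b ∈ S ∧ 0 < w a b) i j)
    (a b : Fin n → ℝ)
    (ha0 : ∀ i, i ∉ S → a i = 0) (hb0 : ∀ i, i ∉ S → b i = 0)
    (hann : ∀ i, 0 ≤ a i) (hbpos : ∀ i ∈ S, 0 < b i)
    (hna : dnorm d r a = 1) (hnb : dnorm d r b = 1)
    (hga : gradE w a = dirEig w d r S) (hgb : gradE w b = dirEig w d r S) :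
    a = b := by
  set c : Fin n → ℝ := fun i => Real.sqrt ((a i ^ 2 + b i ^ 2) / 2) with hcdef
  have hc : ∀ i, c i = Real.sqrt ((a i ^ 2 + b i ^ 2) / 2) := fun i => rfl
  have hcsq : ∀ i, c i ^ 2 = (a i ^ 2 + b i ^ 2) / 2 := fun i => by
    rw [hc i]; exact Real.sq_sqrt (by positivity)
  have hc0 : ∀ i, i ∉ S → c i = 0 := fun i hi => by
    rw [hc i, ha0 i hi, hb0 i hi]; norm_num
  have hcnorm : dnorm d r c = 1 := by
    unfold dnorm
    have : ∀ i : Fin n, Real.rpow (d i) r * c i ^ 2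
        = (Real.rpow (d i) r * a i ^ 2) / 2 + (Real.rpow (d i) r * b i ^ 2) / 2 := fun i => by
      rw [hcsq i]; ring
    rw [Finset.sum_congr rfl fun i _ => this i, Finset.sum_add_distrib]
    have ha' : ∑ i, (Real.rpow (d i) r * a i ^ 2) / 2 = (dnorm d r a) / 2 := by
      unfold dnorm; rw [Finset.sum_div]
    have hb' : ∑ i, (Real.rpow (d i) r * b i ^ 2) / 2 = (dnorm d r b) / 2 := by
      unfold dnorm; rw [Finset.sum_div]
    rw [ha', hb', hna, hnb]; norm_num
  have hgap : ∀ i j, ((a i - a j) ^ 2 + (b i - b j) ^ 2) / 2 - (c i - c j) ^ 2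
      = Real.sqrt ((a i ^ 2 + b i ^ 2) * (a j ^ 2 + b j ^ 2)) - (a i * a j + b i * b j) :=
    fun i j => by rw [hc i, hc j]; exact aux_sqrt_gap (a i) (b i) (a j) (b j)
  have hgap_nonneg : ∀ i j, 0 ≤ ((a i - a j) ^ 2 + (b i - b j) ^ 2) / 2 - (c i - c j) ^ 2 :=
    fun i j => by
      rw [hgap i j]
      have := aux_CS2 (a i) (b i) (a j) (b j)
      linarith
  have key_sum : ∑ i, ∑ j, w i j * (((a i - a j) ^ 2 + (b i - b j) ^ 2) / 2 - (c i - c j) ^ 2)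
      = gradE w a + gradE w b - 2 * gradE w c := by
    have hexp : ∀ i j : Fin n,
        w i j * (((a i - a j) ^ 2 + (b i - b j) ^ 2) / 2 - (c i - c j) ^ 2)
        = (1 / 2) * (w i j * (a i - a j) ^ 2) + (1 / 2) * (w i j * (b i - b j) ^ 2)
          - w i j * (c i - c j) ^ 2 := fun i j => by ring
    simp_rw [hexp, Finset.sum_sub_distrib, Finset.sum_add_distrib, ← Finset.mul_sum]
    unfold gradE
    ring
  have hgcle : gradE w c ≤ dirEig w d r S := by
    have hnn_sum : 0 ≤ ∑ i, ∑ j,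
        w i j * (((a i - a j) ^ 2 + (b i - b j) ^ 2) / 2 - (c i - c j) ^ 2) :=
      Finset.sum_nonneg fun i _ => Finset.sum_nonneg fun j _ =>
        mul_nonneg (hnn i j) (hgap_nonneg i j)
    rw [key_sum] at hnn_sum
    linarith [hga, hgb]
  have hgec : dirEig w d r S ≤ gradE w c := aux_dirEig_le w hnn d r S c hc0 hcnorm
  have hgc : gradE w c = dirEig w d r S := le_antisymm hgcle hgec
  have hzero : ∑ i, ∑ j,
      w i j * (((a i - a j) ^ 2 + (b i - b j) ^ 2) / 2 - (c i - c j) ^ 2) = 0 := by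
    rw [key_sum, hga, hgb, hgc]; ring
  have hterm : ∀ i j, w i j * (((a i - a j) ^ 2 + (b i - b j) ^ 2) / 2 - (c i - c j) ^ 2) = 0 := by
    have h1 := (Finset.sum_eq_zero_iff_of_nonneg (fun i _ =>
      Finset.sum_nonneg fun j _ => mul_nonneg (hnn i j) (hgap_nonneg i j))).mp hzero
    intro i j
    exact (Finset.sum_eq_zero_iff_of_nonneg (fun j _ =>
      mul_nonneg (hnn i j) (hgap_nonneg i j))).mp (h1 i (Finset.mem_univ i)) j (Finset.mem_univ j)
  have hedge : ∀ i j, 0 < w i j → a i * b j = a j * b i := by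
    intro i j hw
    have h0 := hterm i j
    have hgap0 : ((a i - a j) ^ 2 + (b i - b j) ^ 2) / 2 - (c i - c j) ^ 2 = 0 := by
      rcases mul_eq_zero.mp h0 with h | h
      · exact absurd h (ne_of_gt hw)
      · exact h
    have hsq : Real.sqrt ((a i ^ 2 + b i ^ 2) * (a j ^ 2 + b j ^ 2))
        = a i * a j + b i * b j := by
      have := hgap i j
      linarith [hgap i j, hgap0]
    have hsq2 : (a i ^ 2 + b i ^ 2) * (a j ^ 2 + b j ^ 2) = (a i * a j + b i * b j) ^ 2 := by
      have := congrArg (· ^ 2) hsq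
      simpa [Real.sq_sqrt (show (0:ℝ) ≤ (a i ^ 2 + b i ^ 2) * (a j ^ 2 + b j ^ 2) by positivity)]
        using this
    nlinarith [sq_nonneg (a i * b j - a j * b i)]
  have key : ∀ i j, Relation.ReflTransGen (fun a b => a ∈ S ∧ b ∈ S ∧ 0 < w a b) i j →
      a i * b j = a j * b i := by
    intro i j h
    induction h with
    | refl => ring
    | @tail p q hpath hstep ih =>
      obtain ⟨hpS, hqS, hw⟩ := hstep
      have he := hedge p q hw
      have hbp : b p ≠ 0 := ne_of_gt (hbpos p hpS)
      have hmul : (a i * b q) * b p = (a q * b i) * b p := by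
        calc (a i * b q) * b p = (a i * b p) * b q := by ring
          _ = (a p * b i) * b q := by rw [ih]
          _ = (a p * b q) * b i := by ring
          _ = (a q * b p) * b i := by rw [he]
          _ = (a q * b i) * b p := by ring
      exact mul_right_cancel₀ hbp hmul
  obtain ⟨i0, hi0⟩ := hS
  have hbi0 : 0 < b i0 := hbpos i0 hi0
  set t : ℝ := a i0 / b i0 with htdef
  have hat : ∀ i, a i = t * b i := by
    intro i
    by_cases hi : i ∈ S
    · have hk := key i0 i (hSconn i0 hi0 i hi)
      rw [htdef]
      field_simp
      linarith [hk]
    · rw [ha0 i hi, hb0 i hi]; ring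
  have ht2 : t ^ 2 = 1 := by
    have hcomp : dnorm d r a = t ^ 2 * dnorm d r b := by
      unfold dnorm
      rw [Finset.mul_sum]
      exact Finset.sum_congr rfl fun i _ => by rw [hat i]; ring
    rw [hna, hnb] at hcomp
    linarith
  have htnn : 0 ≤ t := div_nonneg (hann i0) hbi0.le
  have ht1 : t = 1 := by nlinarith
  funext i
  rw [hat i, ht1, one_mul]

end Aux

lemma aux_limit_point {n : ℕ} (w : Fin n → Fin n → ℝ)
    (hsym : ∀ i j, w i j = w j i) (hnn : ∀ i j, 0 ≤ w i j)
    (r : ℝ) (d : Fin n → ℝ) (hd : ∀ i, d i = ∑ j, w i j) (hdpos : ∀ i, 0 < d i)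
    (S : Finset (Fin n)) (hS : S.Nonempty)
    (hSconn : ∀ i ∈ S, ∀ j ∈ S,
      Relation.ReflTransGen (fun a b => a ∈ S ∧ b ∈ S ∧ 0 < w a b) i j)
    (ψα : ℝ → Fin n → ℝ)
    (hpos : ∀ α : ℝ, 0 < α → ∀ i, 0 < ψα α i)
    (hnorm : ∀ α : ℝ, 0 < α → dnorm d r (ψα α) = 1)
    (heig : ∀ α : ℝ, 0 < α → ∀ i,
      lapApply w d r (ψα α) i + α * (1 - ind S i) * ψα α i
        = lamAlpha w d r α (ind S) * ψα α i)
    (ψD : Fin n → ℝ)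
    (hDzero : ∀ i, i ∉ S → ψD i = 0) (hDnorm : dnorm d r ψD = 1)
    (hDpos : ∀ i ∈ S, 0 < ψD i) (hDmin : gradE w ψD = dirEig w d r S)
    (v : ℕ → ℝ) (hv : Filter.Tendsto v Filter.atTop Filter.atTop)
    (ψs : Fin n → ℝ)
    (hconv : Filter.Tendsto (fun k => ψα (v k)) Filter.atTop (nhds ψs)) :
    ψs = ψD := by
  set E := gradE w ψD with hE
  have hEnn : 0 ≤ E := aux_gradE_nonneg w hnn ψD
  have hray : ∀ α : ℝ, 0 < α →
      gradE w (ψα α) + α * ∑ i ∈ Sᶜ, Real.rpow (d i) r * ψα α i ^ 2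
        = lamAlpha w d r α (ind S) := fun α hα =>
    aux_rayleigh w hsym d hd hdpos r α _ S (ψα α) (hnorm α hα) (heig α hα)
  have hlam : ∀ α : ℝ, 0 < α → lamAlpha w d r α (ind S) ≤ E := fun α hα =>
    aux_lamAlpha_le w hnn d hdpos r α hα.le S ψD hDzero hDnorm
  have hMnn : ∀ α : ℝ, 0 ≤ ∑ i ∈ Sᶜ, Real.rpow (d i) r * ψα α i ^ 2 := fun α =>
    Finset.sum_nonneg fun i _ => mul_nonneg (Real.rpow_nonneg (hdpos i).le r) (sq_nonneg _)
  have hvev : ∀ᶠ k in Filter.atTop, 0 < v k := hv.eventually (Filter.eventually_gt_atTop 0)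
  -- norm of limit
  have hn1 : dnorm d r ψs = 1 := by
    have t1 : Filter.Tendsto (fun k => dnorm d r (ψα (v k))) Filter.atTop
        (nhds (dnorm d r ψs)) := ((aux_dnorm_continuous d r).tendsto ψs).comp hconv
    have t2 : Filter.Tendsto (fun k => dnorm d r (ψα (v k))) Filter.atTop (nhds 1) := by
      refine Filter.Tendsto.congr' ?_ (tendsto_const_nhds (x := (1:ℝ)))
      exact hvev.mono fun k hk => (hnorm (v k) hk).symm
    exact tendsto_nhds_unique t1 t2
  -- componentwise tendsto
  have hci : ∀ i, Filter.Tendsto (fun k => ψα (v k) i) Filter.atTop (nhds (ψs i)) :=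
    fun i => ((continuous_apply i).tendsto ψs).comp hconv
  -- nonnegativity of limit
  have hsnn : ∀ i, 0 ≤ ψs i := fun i =>
    ge_of_tendsto (hci i) (hvev.mono fun k hk => (hpos (v k) hk i).le)
  -- vanishing off S
  have hs0 : ∀ i, i ∉ S → ψs i = 0 := by
    intro i hi
    have hic : i ∈ Sᶜ := Finset.mem_compl.mpr hi
    have hrp : 0 < Real.rpow (d i) r := Real.rpow_pos_of_pos (hdpos i) r
    have tg : Filter.Tendsto (fun k => Real.rpow (d i) r * ψα (v k) i ^ 2) Filter.atTop
        (nhds (Real.rpow (d i) r * ψs i ^ 2)) := ((hci i).pow 2).const_mul _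
    have tz : Filter.Tendsto (fun k => Real.rpow (d i) r * ψα (v k) i ^ 2) Filter.atTop
        (nhds 0) := by
      apply tendsto_of_tendsto_of_tendsto_of_le_of_le' tendsto_const_nhds
        ((tendsto_const_nhds (x := E)).div_atTop hv)
      · exact Filter.Eventually.of_forall fun k =>
          mul_nonneg (Real.rpow_nonneg (hdpos i).le r) (sq_nonneg _)
      · refine hvev.mono fun k hk => ?_
        have hsingle : Real.rpow (d i) r * ψα (v k) i ^ 2
            ≤ ∑ j ∈ Sᶜ, Real.rpow (d j) r * ψα (v k) j ^ 2 :=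
          Finset.single_le_sum (f := fun j => Real.rpow (d j) r * ψα (v k) j ^ 2)
            (fun j _ => mul_nonneg (Real.rpow_nonneg (hdpos j).le r) (sq_nonneg _)) hic
        have h1 := hray (v k) hk
        have h2 := hlam (v k) hk
        have h3 := aux_gradE_nonneg w hnn (ψα (v k))
        rw [le_div_iff₀ hk]
        nlinarith [hMnn (v k)]
    have h0 : Real.rpow (d i) r * ψs i ^ 2 = 0 := tendsto_nhds_unique tg tz
    have := (mul_eq_zero.mp h0).resolve_left (ne_of_gt hrp)
    exact pow_eq_zero_iff (n := 2) (by norm_num) |>.mp this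
  -- energy of limit
  have hgs : gradE w ψs = dirEig w d r S := by
    refine le_antisymm ?_ (aux_dirEig_le w hnn d r S ψs hs0 hn1)
    have tg : Filter.Tendsto (fun k => gradE w (ψα (v k))) Filter.atTop
        (nhds (gradE w ψs)) := ((aux_gradE_continuous w).tendsto ψs).comp hconv
    have hub : ∀ᶠ k in Filter.atTop, gradE w (ψα (v k)) ≤ E := by
      refine hvev.mono fun k hk => ?_
      have h1 := hray (v k) hk
      have h2 := hlam (v k) hk
      nlinarith [hMnn (v k)]
    have := le_of_tendsto tg hub
    rw [hDmin] at this
    exact this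
  exact aux_unique_min w hnn r d hdpos S hS hSconn ψs ψD hs0 hDzero hsnn hDpos hn1 hDnorm
    hgs hDmin

theorem eigenvector_localization'
    (n : ℕ) (w : Fin n → Fin n → ℝ)
    (hsym : ∀ i j, w i j = w j i) (hnn : ∀ i j, 0 ≤ w i j)
    (r : ℝ)
    (d : Fin n → ℝ) (hd : ∀ i, d i = ∑ j, w i j) (hdpos : ∀ i, 0 < d i)
    (S : Finset (Fin n)) (hS : S.Nonempty)
    (hSconn : ∀ i ∈ S, ∀ j ∈ S,
      Relation.ReflTransGen (fun a b => a ∈ S ∧ b ∈ S ∧ 0 < w a b) i j)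
    (ψα : ℝ → Fin n → ℝ)
    (hpos : ∀ α : ℝ, 0 < α → ∀ i, 0 < ψα α i)
    (hnorm : ∀ α : ℝ, 0 < α → dnorm d r (ψα α) = 1)
    (heig : ∀ α : ℝ, 0 < α → ∀ i,
      lapApply w d r (ψα α) i + α * (1 - ind S i) * ψα α i
        = lamAlpha w d r α (ind S) * ψα α i)
    (ψD : Fin n → ℝ)
    (hDzero : ∀ i, i ∉ S → ψD i = 0) (hDnorm : dnorm d r ψD = 1)
    (hDpos : ∀ i ∈ S, 0 < ψD i) (hDmin : gradE w ψD = dirEig w d r S) :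
    (∀ i, Filter.Tendsto (fun α : ℝ => ψα α i) Filter.atTop (nhds (ψD i))) ∧
    Filter.Tendsto (fun α : ℝ => ∑ i ∈ Sᶜ, Real.rpow (d i) r * ψα α i ^ 2)
      Filter.atTop (nhds 0) := by
  have hne : Nonempty (Fin n) := ⟨hS.choose⟩
  set E := gradE w ψD with hE
  have hEnn : 0 ≤ E := aux_gradE_nonneg w hnn ψD
  have hray : ∀ α : ℝ, 0 < α →
      gradE w (ψα α) + α * ∑ i ∈ Sᶜ, Real.rpow (d i) r * ψα α i ^ 2
        = lamAlpha w d r α (ind S) := fun α hα =>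
    aux_rayleigh w hsym d hd hdpos r α _ S (ψα α) (hnorm α hα) (heig α hα)
  have hlam : ∀ α : ℝ, 0 < α → lamAlpha w d r α (ind S) ≤ E := fun α hα =>
    aux_lamAlpha_le w hnn d hdpos r α hα.le S ψD hDzero hDnorm
  have hMnn : ∀ α : ℝ, 0 ≤ ∑ i ∈ Sᶜ, Real.rpow (d i) r * ψα α i ^ 2 := fun α =>
    Finset.sum_nonneg fun i _ => mul_nonneg (Real.rpow_nonneg (hdpos i).le r) (sq_nonneg _)
  constructor
  · -- convergence of eigenvectors
    have hK := aux_isCompact_sphere d r hdpos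
    have HT : Filter.Tendsto ψα Filter.atTop (nhds ψD) := by
      apply Filter.tendsto_of_subseq_tendsto
      intro ns hns
      obtain ⟨N, hN⟩ :=
        Filter.eventually_atTop.mp (hns.eventually (Filter.eventually_gt_atTop 0))
      have hyK : ∀ k : ℕ, ψα (ns (k + N)) ∈ {ψ : Fin n → ℝ | dnorm d r ψ = 1} := fun k =>
        hnorm _ (hN (k + N) (Nat.le_add_left N k))
      obtain ⟨ψs, _, φ, hφ, hconv⟩ := hK.tendsto_subseq hyK
      have hφN : Filter.Tendsto (fun k => φ k + N) Filter.atTop Filter.atTop :=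
        Filter.tendsto_atTop_mono (fun k => Nat.le_add_right (φ k) N) hφ.tendsto_atTop
      have hv : Filter.Tendsto (fun k => ns (φ k + N)) Filter.atTop Filter.atTop :=
        hns.comp hφN
      have hlim := aux_limit_point w hsym hnn r d hd hdpos S hS hSconn ψα hpos hnorm heig
        ψD hDzero hDnorm hDpos hDmin (fun k => ns (φ k + N)) hv ψs hconv
      exact ⟨fun k => φ k + N, hlim ▸ hconv⟩
    intro i
    exact tendsto_pi_nhds.mp HT i
  · -- mass on the complement vanishes
    apply tendsto_of_tendsto_of_tendsto_of_le_of_le' tendsto_const_nhds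
      ((tendsto_const_nhds (x := E)).div_atTop Filter.tendsto_id)
    · exact Filter.Eventually.of_forall fun α => hMnn α
    · refine (Filter.eventually_gt_atTop 0).mono fun α hα => ?_
      have h1 := hray α hα
      have h2 := hlam α hα
      have h3 := aux_gradE_nonneg w hnn (ψα α)
      simp only [id_eq]
      rw [le_div_iff₀ hα]
      nlinarith

/-- eigenvector localization: the positive normalized minimizers `ψ^α`
converge as `α → ∞` to the positive normalized first Dirichlet eigenvector of `S`, and
the mass on `Sᶜ` tends to zero. -/
theorem eigenvector_localization
    (n : ℕ) (w : Fin n → Fin n → ℝ)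
    (hsym : ∀ i j, w i j = w j i) (hnn : ∀ i j, 0 ≤ w i j)
    (hconn : gconn w)
    (r : ℝ) (hr : r ∈ Set.Icc (0 : ℝ) 1)
    (d : Fin n → ℝ) (hd : ∀ i, d i = ∑ j, w i j) (hdpos : ∀ i, 0 < d i)
    (S : Finset (Fin n)) (hS : S.Nonempty) (hSc : Sᶜ.Nonempty)
    (hSconn : ∀ i ∈ S, ∀ j ∈ S,
      Relation.ReflTransGen (fun a b => a ∈ S ∧ b ∈ S ∧ 0 < w a b) i j)
    (ψα : ℝ → Fin n → ℝ)
    (hpos : ∀ α : ℝ, 0 < α → ∀ i, 0 < ψα α i)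
    (hnorm : ∀ α : ℝ, 0 < α → dnorm d r (ψα α) = 1)
    (heig : ∀ α : ℝ, 0 < α → ∀ i,
      lapApply w d r (ψα α) i + α * (1 - ind S i) * ψα α i
        = lamAlpha w d r α (ind S) * ψα α i)
    (ψD : Fin n → ℝ)
    (hDzero : ∀ i, i ∉ S → ψD i = 0) (hDnorm : dnorm d r ψD = 1)
    (hDpos : ∀ i ∈ S, 0 < ψD i) (hDmin : gradE w ψD = dirEig w d r S) :
    (∀ i, Filter.Tendsto (fun α : ℝ => ψα α i) Filter.atTop (nhds (ψD i))) ∧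
    Filter.Tendsto (fun α : ℝ => ∑ i ∈ Sᶜ, Real.rpow (d i) r * ψα α i ^ 2)
      Filter.atTop (nhds 0) :=
  eigenvector_localization' n w hsym hnn r d hd hdpos S hS hSconn ψα hpos hnorm heig
    ψD hDzero hDnorm hDpos hDmin
end
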